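/- Let (V,μ,ν) be a weighted graph that is uniformly locally finite with constant C₁ > 0, let p ∈ [2,∞), and let f₀ ∈ ℓ¹_ν(V) ∩ ℓ^{p−1}_ν(V). Let φ : [0,∞) × V → ℝ satisfy: (i) φ(0,·) = f₀; (ii) ‖φ(t,·)‖_{ℓ¹_ν} ≤ ‖f₀‖_{ℓ¹_ν} and ‖φ(t,·)‖_{ℓ^{p−1}_ν} ≤ ‖f₀‖_{ℓ^{p−1}_ν} for all t ≥ 0; (iii) for every finitely supported h : V → ℝ, the function t ↦ ∑_{v∈V} φ(t,v)h(v)ν(v) is locally absolutely continuous on [0,∞) and for almost every t its derivative equals −(1/2)∑_{v,w∈V} μ(v,w)|φ(t,v)−φ(t,w)|^{p−2}(φ(t,v)−φ(t,w))(h(v)−h(w)). Then mass is conserved: ∑_{v∈V} φ(t,v)ν(v) = ∑_{v∈V} f₀(v)ν(v) for every t ≥ 0 (all series converging absolutely). -/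

import Mathlib

open Filter Set MeasureTheory Topology


lemma aux_rpow_sub {a b q : ℝ} (hq : 1 ≤ q) :
    |a - b| ^ q ≤ 2 ^ q * (|a| ^ q + |b| ^ q) := by
  have hq0 : (0:ℝ) ≤ q := by linarith
  have h1 : |a - b| ≤ 2 * max |a| |b| := by
    calc |a - b| ≤ |a| + |b| := abs_sub a b
    _ ≤ 2 * max |a| |b| := by
        rcases le_total |a| |b| with h | h <;> simp [max_eq_right, max_eq_left, h] <;> linarith
  have h2 : |a - b| ^ q ≤ (2 * max |a| |b|) ^ q :=
    Real.rpow_le_rpow (abs_nonneg _) h1 hq0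
  have h3 : (2 * max |a| |b|) ^ q = 2 ^ q * (max |a| |b|) ^ q :=
    Real.mul_rpow (by norm_num) (le_max_of_le_left (abs_nonneg _))
  have h4 : (max |a| |b|) ^ q ≤ |a| ^ q + |b| ^ q := by
    rcases le_total |a| |b| with h | h
    · rw [max_eq_right h]
      have := Real.rpow_nonneg (abs_nonneg a) q
      linarith
    · rw [max_eq_left h]
      have := Real.rpow_nonneg (abs_nonneg b) q
      linarith
  calc |a - b| ^ q ≤ 2 ^ q * (max |a| |b|) ^ q := by rw [← h3]; exact h2
  _ ≤ 2 ^ q * (|a| ^ q + |b| ^ q) := by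
      have : (0:ℝ) ≤ 2 ^ q := Real.rpow_nonneg (by norm_num) q
      nlinarith



/-- conservation of mass, `p ≥ 2`.
Let `(V,μ,ν)` be a weighted graph, uniformly locally finite with constant `C₁ > 0`,
let `p ≥ 2` and `f₀ ∈ ℓ¹_ν ∩ ℓ^{p−1}_ν`. If `φ` satisfies the initial condition, the
`ℓ¹`- and `ℓ^{p−1}`-bounds, and the weak (locally absolutely continuous, integrated)
formulation of the parabolic `p`-Laplace equation against finitely supported test
functions, then `∑_v φ(t,v)ν(v) = ∑_v f₀(v)ν(v)` for all `t ≥ 0`. -/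
theorem stmt3 {V : Type*} [Countable V]
    (μ : V → V → ℝ) (ν : V → ℝ)
    (hμsymm : ∀ v w, μ v w = μ w v) (hμnn : ∀ v w, 0 ≤ μ v w) (hμdiag : ∀ v, μ v v = 0)
    (hν : ∀ v, 0 < ν v) (hloc : ∀ v, Summable (fun w => μ v w))
    (C₁ : ℝ) (hC₁ : 0 < C₁) (hulf : ∀ v, C₁ * ∑' w, μ v w ≤ ν v)
    (p : ℝ) (hp : 2 ≤ p)
    (f₀ : V → ℝ)
    (hf₀1 : Summable (fun v => |f₀ v| * ν v))
    (hf₀p : Summable (fun v => |f₀ v| ^ (p - 1) * ν v))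
    (φ : ℝ → V → ℝ)
    -- (i) initial condition
    (h0 : ∀ v, φ 0 v = f₀ v)
    -- (ii) uniform `ℓ¹`- and `ℓ^{p−1}`-bounds
    (hb1 : ∀ t, 0 ≤ t → Summable (fun v => |φ t v| * ν v) ∧
      ∑' v, |φ t v| * ν v ≤ ∑' v, |f₀ v| * ν v)
    (hbp : ∀ t, 0 ≤ t → Summable (fun v => |φ t v| ^ (p - 1) * ν v) ∧
      ∑' v, |φ t v| ^ (p - 1) * ν v ≤ ∑' v, |f₀ v| ^ (p - 1) * ν v)
    -- (iii) for every finitely supported `h`, `t ↦ ∑_v φ(t,v)h(v)ν(v)` is locally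
    -- absolutely continuous with a.e. derivative the discrete Dirichlet form;
    -- equivalently, it is given by the integral of its (locally integrable) density.
    (hweak : ∀ h : V → ℝ, (Function.support h).Finite →
      (∀ t, 0 ≤ t → IntervalIntegrable
        (fun s => (1 / 2) * ∑' x : V × V,
          μ x.1 x.2 * |φ s x.1 - φ s x.2| ^ (p - 2) * (φ s x.1 - φ s x.2) *
            (h x.1 - h x.2))
        MeasureTheory.volume 0 t) ∧
      (∀ t, 0 ≤ t →
        ∑' v, φ t v * h v * ν v = ∑' v, f₀ v * h v * ν v
          - ∫ s in (0 : ℝ)..t, (1 / 2) * ∑' x : V × V,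
              μ x.1 x.2 * |φ s x.1 - φ s x.2| ^ (p - 2) * (φ s x.1 - φ s x.2) *
                (h x.1 - h x.2))) :
    ∀ t, 0 ≤ t → ∑' v, φ t v * ν v = ∑' v, f₀ v * ν v := by
  classical
  intro t ht
  obtain ⟨e, he⟩ := Countable.exists_injective_nat V
  set K : ℕ → Finset V := fun n => (Finset.range n).preimage e (he.injOn) with hKdef
  have hmemK : ∀ n v, v ∈ K n ↔ e v < n := by
    intro n v
    simp [hKdef, Finset.mem_preimage, Finset.mem_range]
  set hh : ℕ → V → ℝ := fun n v => if v ∈ K n then (1:ℝ) else 0 with hhdef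
  have hsupp : ∀ n, (Function.support (hh n)).Finite := by
    intro n
    apply (K n).finite_toSet.subset
    intro v hv
    by_contra hvn
    exact hv (if_neg hvn)
  -- abbreviations
  set g : ℝ → V → ℝ := fun s v => |φ s v| ^ (p - 1) with hgdef
  have hg0 : ∀ s v, 0 ≤ g s v := fun s v => Real.rpow_nonneg (abs_nonneg _) _
  set M : ℝ := ∑' v, |f₀ v| ^ (p - 1) * ν v with hMdef
  -- key summability of the dominating family
  have key : ∀ s : ℝ, 0 ≤ s →
      Summable (fun x : V × V => μ x.1 x.2 * g s x.1 + μ x.1 x.2 * g s x.2) ∧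
      ∑' x : V × V, (μ x.1 x.2 * g s x.1 + μ x.1 x.2 * g s x.2)
        ≤ (1 / C₁) * M + (1 / C₁) * M := by
    intro s hs
    obtain ⟨hsum_p, hle_p⟩ := hbp s hs
    have hrow : ∀ v, Summable (fun w => μ v w * g s v) := fun v => (hloc v).mul_right (g s v)
    have hrowsum : ∀ v : V, ∑' w, μ v w * g s v = (∑' w, μ v w) * g s v := fun v =>
      tsum_mul_right
    have hrowle : ∀ v, (∑' w, μ v w) * g s v ≤ (1 / C₁) * (g s v * ν v) := by
      intro v
      have h1 : ∑' w, μ v w ≤ ν v / C₁ := by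
        rw [le_div_iff₀ hC₁]
        linarith [hulf v]
      have h2 := mul_le_mul_of_nonneg_right h1 (hg0 s v)
      calc (∑' w, μ v w) * g s v ≤ ν v / C₁ * g s v := h2
      _ = (1 / C₁) * (g s v * ν v) := by ring
    have hmaj : Summable (fun v => (1 / C₁) * (g s v * ν v)) := hsum_p.mul_left _
    have hcol : Summable (fun v : V => ∑' w, μ v w * g s v) := by
      apply Summable.of_nonneg_of_le _ _ hmaj
      · intro v
        rw [hrowsum]
        exact mul_nonneg (tsum_nonneg fun w => hμnn v w) (hg0 s v)
      · intro v
        rw [hrowsum]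
        exact hrowle v
    have S1 : Summable (fun x : V × V => μ x.1 x.2 * g s x.1) :=
      (summable_prod_of_nonneg fun x => mul_nonneg (hμnn _ _) (hg0 s _)).2 ⟨hrow, hcol⟩
    have S1t : ∑' x : V × V, μ x.1 x.2 * g s x.1 ≤ (1 / C₁) * M := by
      rw [S1.tsum_prod' hrow]
      calc ∑' v, ∑' w, μ v w * g s v ≤ ∑' v, (1 / C₁) * (g s v * ν v) := by
            apply Summable.tsum_le_tsum _ hcol hmaj
            intro v
            rw [hrowsum]
            exact hrowle v
      _ = (1 / C₁) * ∑' v, g s v * ν v := tsum_mul_left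
      _ ≤ (1 / C₁) * M := by
          apply mul_le_mul_of_nonneg_left hle_p
          positivity
    -- swapped version
    have hswap : (fun x : V × V => μ x.1 x.2 * g s x.1) ∘ (Equiv.prodComm V V) =
        fun x : V × V => μ x.1 x.2 * g s x.2 := by
      funext x
      simp [Equiv.prodComm, hμsymm x.2 x.1]
    have S2 : Summable (fun x : V × V => μ x.1 x.2 * g s x.2) := by
      rw [← hswap]
      exact (Equiv.prodComm V V).summable_iff.2 S1
    have S2t : ∑' x : V × V, μ x.1 x.2 * g s x.2 ≤ (1 / C₁) * M := by
      have := (Equiv.prodComm V V).tsum_eq (fun x : V × V => μ x.1 x.2 * g s x.1)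
      calc ∑' x : V × V, μ x.1 x.2 * g s x.2
          = ∑' x : V × V, ((fun y : V × V => μ y.1 y.2 * g s y.1) ∘ (Equiv.prodComm V V)) x := by
            rw [hswap]
      _ = ∑' x : V × V, μ x.1 x.2 * g s x.1 := this
      _ ≤ (1 / C₁) * M := S1t
    refine ⟨S1.add S2, ?_⟩
    calc ∑' x : V × V, (μ x.1 x.2 * g s x.1 + μ x.1 x.2 * g s x.2)
        = (∑' x : V × V, μ x.1 x.2 * g s x.1) + ∑' x : V × V, μ x.1 x.2 * g s x.2 :=
          S1.tsum_add S2
    _ ≤ (1 / C₁) * M + (1 / C₁) * M := add_le_add S1t S2t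
  -- pointwise bound on terms
  have hhbd : ∀ n v w, |hh n v - hh n w| ≤ 1 := by
    intro n v w
    simp only [hhdef]
    split_ifs <;> norm_num
  have htermbd : ∀ (n : ℕ) (s : ℝ) (x : V × V),
      |μ x.1 x.2 * |φ s x.1 - φ s x.2| ^ (p - 2) * (φ s x.1 - φ s x.2) *
        (hh n x.1 - hh n x.2)|
      ≤ 2 ^ (p - 1) * (μ x.1 x.2 * g s x.1 + μ x.1 x.2 * g s x.2) := by
    intro n s x
    have hΔ : |φ s x.1 - φ s x.2| ^ (p - 2) * |φ s x.1 - φ s x.2|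
        = |φ s x.1 - φ s x.2| ^ (p - 1) := by
      rw [show p - 1 = (p - 2) + 1 by ring, Real.rpow_add' (abs_nonneg _) (by intro h; nlinarith),
        Real.rpow_one]
    have hbound : |φ s x.1 - φ s x.2| ^ (p - 1)
        ≤ 2 ^ (p - 1) * (g s x.1 + g s x.2) := aux_rpow_sub (by linarith)
    have hnn2 : (0:ℝ) ≤ |φ s x.1 - φ s x.2| ^ (p - 2) := Real.rpow_nonneg (abs_nonneg _) _
    calc |μ x.1 x.2 * |φ s x.1 - φ s x.2| ^ (p - 2) * (φ s x.1 - φ s x.2) *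
          (hh n x.1 - hh n x.2)|
        = μ x.1 x.2 * (|φ s x.1 - φ s x.2| ^ (p - 2) * |φ s x.1 - φ s x.2|) *
          |hh n x.1 - hh n x.2| := by
          rw [abs_mul, abs_mul, abs_mul, abs_of_nonneg (hμnn _ _), abs_of_nonneg hnn2]
          ring
    _ = μ x.1 x.2 * |φ s x.1 - φ s x.2| ^ (p - 1) * |hh n x.1 - hh n x.2| := by rw [hΔ]
    _ ≤ μ x.1 x.2 * |φ s x.1 - φ s x.2| ^ (p - 1) * 1 := by
        apply mul_le_mul_of_nonneg_left (hhbd n x.1 x.2)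
        exact mul_nonneg (hμnn _ _) (Real.rpow_nonneg (abs_nonneg _) _)
    _ = μ x.1 x.2 * |φ s x.1 - φ s x.2| ^ (p - 1) := mul_one _
    _ ≤ μ x.1 x.2 * (2 ^ (p - 1) * (g s x.1 + g s x.2)) :=
        mul_le_mul_of_nonneg_left hbound (hμnn _ _)
    _ = 2 ^ (p - 1) * (μ x.1 x.2 * g s x.1 + μ x.1 x.2 * g s x.2) := by ring
  -- the constant dominating the Dirichlet form
  set Cb : ℝ := 2 ^ (p - 1) * ((1 / C₁) * M + (1 / C₁) * M) with hCbdef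
  have hdomsum : ∀ s : ℝ, 0 ≤ s → Summable (fun x : V × V =>
      2 ^ (p - 1) * (μ x.1 x.2 * g s x.1 + μ x.1 x.2 * g s x.2)) :=
    fun s hs => ((key s hs).1).mul_left _
  have habsum : ∀ (n : ℕ) (s : ℝ), 0 ≤ s → Summable (fun x : V × V =>
      |μ x.1 x.2 * |φ s x.1 - φ s x.2| ^ (p - 2) * (φ s x.1 - φ s x.2) *
        (hh n x.1 - hh n x.2)|) := by
    intro n s hs
    exact Summable.of_nonneg_of_le (fun x => abs_nonneg _) (fun x => htermbd n s x)
      (hdomsum s hs)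
  have hDbd : ∀ (n : ℕ) (s : ℝ), 0 ≤ s →
      |(1/2 : ℝ) * ∑' x : V × V, μ x.1 x.2 * |φ s x.1 - φ s x.2| ^ (p - 2) *
        (φ s x.1 - φ s x.2) * (hh n x.1 - hh n x.2)| ≤ Cb := by
    intro n s hs
    have h1 : |∑' x : V × V, μ x.1 x.2 * |φ s x.1 - φ s x.2| ^ (p - 2) *
        (φ s x.1 - φ s x.2) * (hh n x.1 - hh n x.2)|
        ≤ ∑' x : V × V, |μ x.1 x.2 * |φ s x.1 - φ s x.2| ^ (p - 2) *
          (φ s x.1 - φ s x.2) * (hh n x.1 - hh n x.2)| := by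
      simpa only [Real.norm_eq_abs] using
        norm_tsum_le_tsum_norm (f := fun x : V × V =>
          μ x.1 x.2 * |φ s x.1 - φ s x.2| ^ (p - 2) * (φ s x.1 - φ s x.2) *
            (hh n x.1 - hh n x.2))
          (by simpa only [Real.norm_eq_abs] using habsum n s hs)
    have h2 : ∑' x : V × V, |μ x.1 x.2 * |φ s x.1 - φ s x.2| ^ (p - 2) *
        (φ s x.1 - φ s x.2) * (hh n x.1 - hh n x.2)|
        ≤ ∑' x : V × V, 2 ^ (p - 1) * (μ x.1 x.2 * g s x.1 + μ x.1 x.2 * g s x.2) :=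
      Summable.tsum_le_tsum (htermbd n s) (habsum n s hs) (hdomsum s hs)
    have h3 : ∑' x : V × V, 2 ^ (p - 1) * (μ x.1 x.2 * g s x.1 + μ x.1 x.2 * g s x.2)
        = 2 ^ (p - 1) * ∑' x : V × V, (μ x.1 x.2 * g s x.1 + μ x.1 x.2 * g s x.2) :=
      tsum_mul_left
    have h4 : (2:ℝ) ^ (p - 1) * ∑' x : V × V, (μ x.1 x.2 * g s x.1 + μ x.1 x.2 * g s x.2)
        ≤ Cb := by
      apply mul_le_mul_of_nonneg_left (key s hs).2
      exact Real.rpow_nonneg (by norm_num) _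
    have h5 : (0:ℝ) ≤ |∑' x : V × V, μ x.1 x.2 * |φ s x.1 - φ s x.2| ^ (p - 2) *
        (φ s x.1 - φ s x.2) * (hh n x.1 - hh n x.2)| := abs_nonneg _
    rw [abs_mul]
    have : |(1/2 : ℝ)| = 1/2 := by norm_num
    rw [this]
    nlinarith [h1, h2, h3.le, h4]
  -- pointwise (in time) convergence of the Dirichlet forms to 0
  have hDlim : ∀ s : ℝ, 0 ≤ s →
      Tendsto (fun n => (1/2 : ℝ) * ∑' x : V × V, μ x.1 x.2 *
        |φ s x.1 - φ s x.2| ^ (p - 2) * (φ s x.1 - φ s x.2) * (hh n x.1 - hh n x.2))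
        atTop (𝓝 0) := by
    intro s hs
    have hab : ∀ x : V × V, Tendsto (fun n => μ x.1 x.2 * |φ s x.1 - φ s x.2| ^ (p - 2) *
        (φ s x.1 - φ s x.2) * (hh n x.1 - hh n x.2)) atTop (𝓝 0) := by
      intro x
      have hev : ∀ᶠ n in atTop, (0:ℝ) = μ x.1 x.2 * |φ s x.1 - φ s x.2| ^ (p - 2) *
          (φ s x.1 - φ s x.2) * (hh n x.1 - hh n x.2) := by
        refine eventually_atTop.2 ⟨max (e x.1) (e x.2) + 1, fun n hn => ?_⟩
        have h1 : x.1 ∈ K n := (hmemK n x.1).2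
          (lt_of_lt_of_le (Nat.lt_succ_of_le (le_max_left _ _)) hn)
        have h2 : x.2 ∈ K n := (hmemK n x.2).2
          (lt_of_lt_of_le (Nat.lt_succ_of_le (le_max_right _ _)) hn)
        simp [hhdef, h1, h2]
      exact Tendsto.congr' hev tendsto_const_nhds
    have hT := tendsto_tsum_of_dominated_convergence
      (f := fun (n : ℕ) (x : V × V) => μ x.1 x.2 * |φ s x.1 - φ s x.2| ^ (p - 2) *
        (φ s x.1 - φ s x.2) * (hh n x.1 - hh n x.2))
      (g := fun _ : V × V => (0:ℝ))
      (bound := fun x : V × V => 2 ^ (p - 1) * (μ x.1 x.2 * g s x.1 + μ x.1 x.2 * g s x.2))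
      (hdomsum s hs) hab
      (Eventually.of_forall fun n => fun x => by
        simpa only [Real.norm_eq_abs] using htermbd n s x)
    have hT' := hT.const_mul (1/2 : ℝ)
    simpa using hT'
  -- integrability data from the weak formulation
  have hw := fun n => hweak (hh n) (hsupp n)
  have hImeas : ∀ n : ℕ, AEStronglyMeasurable
      (fun s => (1/2 : ℝ) * ∑' x : V × V, μ x.1 x.2 * |φ s x.1 - φ s x.2| ^ (p - 2) *
        (φ s x.1 - φ s x.2) * (hh n x.1 - hh n x.2))
      (volume.restrict (Set.uIoc (0:ℝ) t)) := by
    intro n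
    have h1 := ((hw n).1 t ht).1.aestronglyMeasurable
    rwa [Set.uIoc_of_le ht]
  have hIten : Tendsto (fun n => ∫ s in (0:ℝ)..t, (1/2 : ℝ) * ∑' x : V × V,
      μ x.1 x.2 * |φ s x.1 - φ s x.2| ^ (p - 2) * (φ s x.1 - φ s x.2) *
        (hh n x.1 - hh n x.2)) atTop (𝓝 (∫ _ in (0:ℝ)..t, (0:ℝ))) := by
    apply intervalIntegral.tendsto_integral_filter_of_dominated_convergence (fun _ => Cb)
      (Eventually.of_forall hImeas)
      (Eventually.of_forall fun n => ae_of_all _ fun s hs => ?_)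
      intervalIntegrable_const
      (ae_of_all _ fun s hs => ?_)
    · have hs0 : (0:ℝ) ≤ s := by
        rw [Set.uIoc_of_le ht] at hs
        exact hs.1.le
      simpa only [Real.norm_eq_abs] using hDbd n s hs0
    · have hs0 : (0:ℝ) ≤ s := by
        rw [Set.uIoc_of_le ht] at hs
        exact hs.1.le
      exact hDlim s hs0
  have hIzero : Tendsto (fun n => ∫ s in (0:ℝ)..t, (1/2 : ℝ) * ∑' x : V × V,
      μ x.1 x.2 * |φ s x.1 - φ s x.2| ^ (p - 2) * (φ s x.1 - φ s x.2) *
        (hh n x.1 - hh n x.2)) atTop (𝓝 0) := by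
    simpa using hIten
  -- convergence of the partial sums
  have hsumφ : Summable (fun v => φ t v * ν v) := by
    have h1 : (fun v => |φ t v * ν v|) = fun v => |φ t v| * ν v := by
      funext v; rw [abs_mul, abs_of_pos (hν v)]
    have h2 := (hb1 t ht).1
    rw [← h1] at h2
    exact summable_abs_iff.1 h2
  have hsumf : Summable (fun v => f₀ v * ν v) := by
    have h1 : (fun v => |f₀ v * ν v|) = fun v => |f₀ v| * ν v := by
      funext v; rw [abs_mul, abs_of_pos (hν v)]
    have h2 := hf₀1
    rw [← h1] at h2
    exact summable_abs_iff.1 h2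
  have hKmono : Monotone K := by
    intro m n hmn v hv
    rw [hmemK] at hv ⊢
    omega
  have hKtend : Tendsto K atTop atTop :=
    tendsto_atTop_finset_of_monotone hKmono
      (fun v => ⟨e v + 1, (hmemK _ v).2 (Nat.lt_succ_self _)⟩)
  have hA : Tendsto (fun n => ∑ v ∈ K n, φ t v * ν v) atTop (𝓝 (∑' v, φ t v * ν v)) := by
    have h1 : Tendsto (fun F : Finset V => ∑ v ∈ F, φ t v * ν v) atTop
        (𝓝 (∑' v, φ t v * ν v)) := hsumφ.hasSum
    exact h1.comp hKtend
  have hB : Tendsto (fun n => ∑ v ∈ K n, f₀ v * ν v) atTop (𝓝 (∑' v, f₀ v * ν v)) := by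
    have h1 : Tendsto (fun F : Finset V => ∑ v ∈ F, f₀ v * ν v) atTop
        (𝓝 (∑' v, f₀ v * ν v)) := hsumf.hasSum
    exact h1.comp hKtend
  have hTA : ∀ n, ∑' v, φ t v * hh n v * ν v = ∑ v ∈ K n, φ t v * ν v := by
    intro n
    have hz : ∀ v ∉ K n, φ t v * hh n v * ν v = 0 := fun v hv => by simp [hhdef, hv]
    rw [tsum_eq_sum hz]
    exact Finset.sum_congr rfl fun v hv => by simp [hhdef, hv]
  have hTB : ∀ n, ∑' v, f₀ v * hh n v * ν v = ∑ v ∈ K n, f₀ v * ν v := by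
    intro n
    have hz : ∀ v ∉ K n, f₀ v * hh n v * ν v = 0 := fun v hv => by simp [hhdef, hv]
    rw [tsum_eq_sum hz]
    exact Finset.sum_congr rfl fun v hv => by simp [hhdef, hv]
  have hEq : ∀ n, ∑ v ∈ K n, φ t v * ν v
      = ∑ v ∈ K n, f₀ v * ν v - ∫ s in (0:ℝ)..t, (1/2 : ℝ) * ∑' x : V × V,
        μ x.1 x.2 * |φ s x.1 - φ s x.2| ^ (p - 2) * (φ s x.1 - φ s x.2) *
          (hh n x.1 - hh n x.2) := by
    intro n
    rw [← hTA n, ← hTB n]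
    exact (hw n).2 t ht
  have hA' : Tendsto (fun n => ∑ v ∈ K n, f₀ v * ν v - ∫ s in (0:ℝ)..t, (1/2 : ℝ) *
      ∑' x : V × V, μ x.1 x.2 * |φ s x.1 - φ s x.2| ^ (p - 2) * (φ s x.1 - φ s x.2) *
        (hh n x.1 - hh n x.2)) atTop (𝓝 (∑' v, φ t v * ν v)) := hA.congr hEq
  have hfin := tendsto_nhds_unique hA' (hB.sub hIzero)
  simpa using hfin
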